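/- Let m ≥ 1, x₀ ∈ ℝ^m, f and g₁,…,g_m as follows: f : [0,∞) × ℝ^m × ℝ^m → ℝ^m continuous with ‖f(t,u₁,v₁) − f(t,u₂,v₂)‖ ≤ L(‖u₁−u₂‖ + ‖v₁−v₂‖) for t ∈ [0,T], u₁,u₂ ∈ ∏_{i=1}^m [x₀ᵢ−α, x₀ᵢ+α], v₁,v₂ ∈ ∏_{i=1}^m g_i([x₀ᵢ−α, x₀ᵢ+α]); g_i : ℝ → ℝ continuous with |g_i(x) − g_i(y)| ≤ L_α|x−y| on [x₀ᵢ−α, x₀ᵢ+α]; and M := max ‖f‖ on [0,T] × ∏ [x₀ᵢ−α, x₀ᵢ+α] × ∏ g_i([x₀ᵢ−α, x₀ᵢ+α]) > 0. Fix 0 < T̄ < min{α/M, 1/(L(1+L_α√m)), T}, let X := { x ∈ C([0,T̄]; ℝ^m) : ‖x(t) − x₀‖ ≤ α for all t ∈ [0,T̄] }, and define F : X → C([0,T̄]; ℝ^m) by F(x)(t) = x₀ + ∫₀ᵗ f(s, x(s), max_{τ∈[0,s]} g₁(x₁(τ)), …, max_{τ∈[0,s]} g_m(x_m(τ))) ds.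 Then F(X) ⊆ X and ‖F(x) − F(y)‖_∞ ≤ T̄ L (1 + √m L_α) ‖x − y‖_∞ for all x, y ∈ X; in particular F is a contraction on X. -/

import Mathlib

open Set

private lemma abs_coord_le_norm' {m : ℕ} (u : EuclideanSpace ℝ (Fin m)) (i : Fin m) :
    |u i| ≤ ‖u‖ := by
  rw [EuclideanSpace.norm_eq, ← Real.sqrt_sq_eq_abs]
  apply Real.sqrt_le_sqrt
  calc u i ^ 2 = ‖u i‖ ^ 2 := by rw [Real.norm_eq_abs, sq_abs]
  _ ≤ ∑ j, ‖u j‖ ^ 2 :=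
    Finset.single_le_sum (f := fun j => ‖u j‖ ^ 2) (fun j _ => sq_nonneg _) (Finset.mem_univ i)

private lemma norm_le_sqrt_card' {m : ℕ} (u : EuclideanSpace ℝ (Fin m)) (C : ℝ) (hC : 0 ≤ C)
    (h : ∀ i, |u i| ≤ C) : ‖u‖ ≤ Real.sqrt m * C := by
  rw [EuclideanSpace.norm_eq]
  have h1 : ∑ j, ‖u j‖ ^ 2 ≤ (m : ℝ) * C ^ 2 := by
    calc ∑ j, ‖u j‖ ^ 2 ≤ ∑ _j : Fin m, C ^ 2 := by
          refine Finset.sum_le_sum fun j _ => ?_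
          rw [Real.norm_eq_abs]
          exact pow_le_pow_left₀ (abs_nonneg _) (h j) 2
    _ = (m : ℝ) * C ^ 2 := by simp
  calc Real.sqrt (∑ j, ‖u j‖ ^ 2) ≤ Real.sqrt ((m : ℝ) * C ^ 2) := Real.sqrt_le_sqrt h1
  _ = Real.sqrt m * C := by
      rw [Real.sqrt_mul (Nat.cast_nonneg m), Real.sqrt_sq hC]

private lemma isGreatest_sSup_image' {h : ℝ → ℝ} {b s : ℝ} (hb : ContinuousOn h (Icc 0 b))
    (hs : s ∈ Icc 0 b) : IsGreatest (h '' Icc 0 s) (sSup (h '' Icc 0 s)) := by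
  have hsub : Icc (0:ℝ) s ⊆ Icc 0 b := Icc_subset_Icc le_rfl hs.2
  have hc : IsCompact (h '' Icc 0 s) := isCompact_Icc.image_of_continuousOn (hb.mono hsub)
  have hne : (h '' Icc 0 s).Nonempty := (nonempty_Icc.2 hs.1).image _
  exact ⟨hc.sSup_mem hne, (isLUB_csSup hne hc.bddAbove).1⟩

private lemma abs_sSup_sub_sSup_le' {h₁ h₂ : ℝ → ℝ} {s C : ℝ}
    (H₁ : IsGreatest (h₁ '' Icc 0 s) (sSup (h₁ '' Icc 0 s)))
    (H₂ : IsGreatest (h₂ '' Icc 0 s) (sSup (h₂ '' Icc 0 s)))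
    (hC : ∀ τ ∈ Icc (0:ℝ) s, |h₁ τ - h₂ τ| ≤ C) :
    |sSup (h₁ '' Icc 0 s) - sSup (h₂ '' Icc 0 s)| ≤ C := by
  rw [abs_sub_le_iff]
  constructor
  · obtain ⟨τ, hτ, hτeq⟩ := H₁.1
    have h2 : h₂ τ ≤ sSup (h₂ '' Icc 0 s) := H₂.2 ⟨τ, hτ, rfl⟩
    have := hC τ hτ
    rw [abs_le] at this
    linarith [hτeq ▸ le_refl (sSup (h₁ '' Icc 0 s))]
  · obtain ⟨τ, hτ, hτeq⟩ := H₂.1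
    have h1 : h₁ τ ≤ sSup (h₁ '' Icc 0 s) := H₁.2 ⟨τ, hτ, rfl⟩
    have := hC τ hτ
    rw [abs_le] at this
    linarith [hτeq ▸ le_refl (sSup (h₂ '' Icc 0 s))]

private lemma continuousOn_running_sSup' {h : ℝ → ℝ} {b : ℝ}
    (hb : ContinuousOn h (Icc 0 b)) :
    ContinuousOn (fun s => sSup (h '' Icc 0 s)) (Icc 0 b) := by
  have huc : UniformContinuousOn h (Icc 0 b) :=
    isCompact_Icc.uniformContinuousOn_of_continuous hb
  rw [Metric.continuousOn_iff]
  intro a ha ε hε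
  obtain ⟨δ, hδ, hδ'⟩ := Metric.uniformContinuousOn_iff.1 huc (ε/2) (by linarith)
  refine ⟨δ, hδ, fun s hs hdist => ?_⟩
  have key : ∀ p q : ℝ, p ∈ Icc 0 b → q ∈ Icc 0 b → p ≤ q → q - p < δ →
      sSup (h '' Icc 0 p) ≤ sSup (h '' Icc 0 q) ∧
      sSup (h '' Icc 0 q) ≤ sSup (h '' Icc 0 p) + ε/2 := by
    intro p q hp hq hpq hd
    have Hp := isGreatest_sSup_image' hb hp
    have Hq := isGreatest_sSup_image' hb hq
    have hcq : IsCompact (h '' Icc 0 q) :=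
      isCompact_Icc.image_of_continuousOn (hb.mono (Icc_subset_Icc le_rfl hq.2))
    constructor
    · exact csSup_le_csSup hcq.bddAbove ((nonempty_Icc.2 hp.1).image _)
        (image_mono (Icc_subset_Icc le_rfl hpq))
    · obtain ⟨τ, hτ, hτeq⟩ := Hq.1
      rw [← hτeq]
      rcases le_or_gt τ p with hc | hc
      · have : h τ ≤ sSup (h '' Icc 0 p) := Hp.2 ⟨τ, ⟨hτ.1, hc⟩, rfl⟩
        linarith
      · have hτI : τ ∈ Icc 0 b := ⟨hτ.1, hτ.2.trans hq.2⟩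
        have hdτ : dist (h τ) (h p) < ε/2 := by
          apply hδ' τ hτI p hp
          rw [Real.dist_eq, abs_lt]
          constructor <;> [linarith [hτ.2]; linarith [hτ.2]]
        have hhp : h p ≤ sSup (h '' Icc 0 p) := Hp.2 ⟨p, ⟨hp.1, le_rfl⟩, rfl⟩
        rw [Real.dist_eq, abs_lt] at hdτ
        linarith
  rw [Real.dist_eq]
  rw [Real.dist_eq, abs_lt] at hdist
  rcases le_total s a with hsa | has
  · obtain ⟨k1, k2⟩ := key s a hs ha hsa (by linarith)
    rw [abs_lt]; constructor <;> linarith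
  · obtain ⟨k1, k2⟩ := key a s ha hs has (by linarith)
    rw [abs_lt]; constructor <;> linarith

/-- The Picard operator `F(x)(t) = x₀ + ∫₀ᵗ f(s, x(s), (max_{[0,s]} gᵢ∘xᵢ)ᵢ) ds` maps the ball
`X = {x ∈ C([0,T̄];ℝᵐ) : ‖x(t) − x₀‖ ≤ α}` into itself and satisfies
`‖F(x) − F(y)‖_∞ ≤ T̄ L (1 + √m L_α) ‖x − y‖_∞` on `X`; in particular, since
`T̄ L (1 + √m L_α) < 1`, `F` is a contraction on `X`. -/
theorem picard_operator_contraction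
    (m : ℕ) (hm : 1 ≤ m) (x₀ : EuclideanSpace ℝ (Fin m))
    (f : ℝ → EuclideanSpace ℝ (Fin m) → EuclideanSpace ℝ (Fin m) → EuclideanSpace ℝ (Fin m))
    (g : Fin m → ℝ → ℝ)
    (hf : ContinuousOn
      (fun p : ℝ × EuclideanSpace ℝ (Fin m) × EuclideanSpace ℝ (Fin m) => f p.1 p.2.1 p.2.2)
      (Set.Ici 0 ×ˢ Set.univ ×ˢ Set.univ))
    (hg : ∀ i, Continuous (g i))
    (α T M L Lα : ℝ) (hα : 0 < α) (hT : 0 < T)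
    (hM : IsGreatest
      ((fun p : ℝ × EuclideanSpace ℝ (Fin m) × EuclideanSpace ℝ (Fin m) => ‖f p.1 p.2.1 p.2.2‖) ''
        (Set.Icc 0 T ×ˢ {u | ∀ i, u i ∈ Set.Icc (x₀ i - α) (x₀ i + α)} ×ˢ
          {v | ∀ i, v i ∈ g i '' Set.Icc (x₀ i - α) (x₀ i + α)})) M)
    (hMpos : 0 < M) (hL : 0 < L) (hLα : 0 < Lα)
    (hfL : ∀ t ∈ Set.Icc (0:ℝ) T, ∀ u₁ u₂ v₁ v₂ : EuclideanSpace ℝ (Fin m),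
      (∀ i, u₁ i ∈ Set.Icc (x₀ i - α) (x₀ i + α)) →
      (∀ i, u₂ i ∈ Set.Icc (x₀ i - α) (x₀ i + α)) →
      (∀ i, v₁ i ∈ g i '' Set.Icc (x₀ i - α) (x₀ i + α)) →
      (∀ i, v₂ i ∈ g i '' Set.Icc (x₀ i - α) (x₀ i + α)) →
      ‖f t u₁ v₁ - f t u₂ v₂‖ ≤ L * (‖u₁ - u₂‖ + ‖v₁ - v₂‖))
    (hgL : ∀ i, ∀ x ∈ Set.Icc (x₀ i - α) (x₀ i + α), ∀ y ∈ Set.Icc (x₀ i - α) (x₀ i + α),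
      |g i x - g i y| ≤ Lα * |x - y|)
    (T' : ℝ) (hT'pos : 0 < T')
    (hT' : T' < min (min (α / M) (1 / (L * (1 + Lα * Real.sqrt m)))) T)
    (F : (ℝ → EuclideanSpace ℝ (Fin m)) → ℝ → EuclideanSpace ℝ (Fin m))
    (hF : ∀ x : ℝ → EuclideanSpace ℝ (Fin m), ∀ t : ℝ,
      F x t = x₀ + ∫ s in (0:ℝ)..t,
        f s (x s) ((WithLp.equiv 2 (Fin m → ℝ)).symm
          fun i => sSup ((fun τ => g i (x τ i)) '' Set.Icc 0 s))) :
    (∀ x : ℝ → EuclideanSpace ℝ (Fin m), ContinuousOn x (Set.Icc 0 T') →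
      (∀ t ∈ Set.Icc (0:ℝ) T', ‖x t - x₀‖ ≤ α) →
      ContinuousOn (F x) (Set.Icc 0 T') ∧ ∀ t ∈ Set.Icc (0:ℝ) T', ‖F x t - x₀‖ ≤ α) ∧
    (∀ x y : ℝ → EuclideanSpace ℝ (Fin m), ContinuousOn x (Set.Icc 0 T') →
      ContinuousOn y (Set.Icc 0 T') →
      (∀ t ∈ Set.Icc (0:ℝ) T', ‖x t - x₀‖ ≤ α) → (∀ t ∈ Set.Icc (0:ℝ) T', ‖y t - x₀‖ ≤ α) →
      ∀ t ∈ Set.Icc (0:ℝ) T', ‖F x t - F y t‖ ≤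
        T' * L * (1 + Real.sqrt m * Lα) * sSup ((fun s => ‖x s - y s‖) '' Set.Icc 0 T')) ∧
    T' * L * (1 + Real.sqrt m * Lα) < 1 := by
  have h0T' : (0:ℝ) ∈ Icc (0:ℝ) T' := ⟨le_rfl, hT'pos.le⟩
  have hT'T : T' < T := lt_of_lt_of_le hT' (min_le_right _ _)
  have hT'αM : T' < α / M := lt_of_lt_of_le hT' ((min_le_left _ _).trans (min_le_left _ _))
  have hT'L : T' < 1 / (L * (1 + Lα * Real.sqrt m)) :=
    lt_of_lt_of_le hT' ((min_le_left _ _).trans (min_le_right _ _))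
  have hsqm : (0:ℝ) ≤ Real.sqrt m := Real.sqrt_nonneg _
  have hden : 0 < L * (1 + Lα * Real.sqrt m) := by positivity
  have hlast : T' * L * (1 + Real.sqrt m * Lα) < 1 := by
    have h1 := (lt_div_iff₀ hden).1 hT'L
    nlinarith
  -- coordinates of points in the ball lie in the box
  have coordBox : ∀ x : ℝ → EuclideanSpace ℝ (Fin m),
      (∀ t ∈ Icc (0:ℝ) T', ‖x t - x₀‖ ≤ α) →
      ∀ s ∈ Icc (0:ℝ) T', ∀ i, x s i ∈ Icc (x₀ i - α) (x₀ i + α) := by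
    intro x hxα s hs i
    have h1 : |x s i - x₀ i| ≤ ‖x s - x₀‖ := by
      have := abs_coord_le_norm' (x s - x₀) i
      simpa [PiLp.sub_apply] using this
    have h2 := h1.trans (hxα s hs)
    rw [abs_le] at h2
    exact ⟨by linarith [h2.1], by linarith [h2.2]⟩
  have coordCont : ∀ x : ℝ → EuclideanSpace ℝ (Fin m), ContinuousOn x (Icc 0 T') →
      ∀ i, ContinuousOn (fun s => x s i) (Icc 0 T') := fun x hx i =>
    (EuclideanSpace.proj (𝕜 := ℝ) i).continuous.comp_continuousOn hx
  -- membership of the running-max vector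
  have hVmem : ∀ x : ℝ → EuclideanSpace ℝ (Fin m),
      (∀ t ∈ Icc (0:ℝ) T', ‖x t - x₀‖ ≤ α) → ContinuousOn x (Icc 0 T') →
      ∀ s ∈ Icc (0:ℝ) T', ∀ i,
      ((WithLp.equiv 2 (Fin m → ℝ)).symm
        (fun j => sSup ((fun τ => g j (x τ j)) '' Icc 0 s))) i
        ∈ g i '' Icc (x₀ i - α) (x₀ i + α) := by
    intro x hxα hx s hs i
    rw [WithLp.equiv_symm_apply, PiLp.toLp_apply]
    have hcont : ContinuousOn (fun τ => g i (x τ i)) (Icc 0 T') :=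
      (hg i).comp_continuousOn (coordCont x hx i)
    obtain ⟨τ, hτ, hτeq⟩ := (isGreatest_sSup_image' hcont hs).1
    exact ⟨x τ i, coordBox x hxα τ ⟨hτ.1, hτ.2.trans hs.2⟩ i, hτeq⟩
  -- continuity of the running-max vector
  have hVcont : ∀ x : ℝ → EuclideanSpace ℝ (Fin m), ContinuousOn x (Icc 0 T') →
      ContinuousOn (fun s => (WithLp.equiv 2 (Fin m → ℝ)).symm
        fun i => sSup ((fun τ => g i (x τ i)) '' Icc 0 s)) (Icc 0 T') := by
    intro x hx
    apply (PiLp.continuous_toLp 2 (fun _ : Fin m => ℝ)).comp_continuousOn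
    apply continuousOn_pi.2
    intro i
    exact continuousOn_running_sSup' ((hg i).comp_continuousOn (coordCont x hx i))
  -- continuity of the integrand
  have hGcont : ∀ x : ℝ → EuclideanSpace ℝ (Fin m), ContinuousOn x (Icc 0 T') →
      ContinuousOn (fun s => f s (x s) ((WithLp.equiv 2 (Fin m → ℝ)).symm
        fun i => sSup ((fun τ => g i (x τ i)) '' Icc 0 s))) (Icc 0 T') := by
    intro x hx
    have hmap : ContinuousOn (fun s : ℝ => (s, x s, (WithLp.equiv 2 (Fin m → ℝ)).symm
        fun i => sSup ((fun τ => g i (x τ i)) '' Icc 0 s))) (Icc 0 T') :=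
      continuousOn_id.prodMk (hx.prodMk (hVcont x hx))
    exact hf.comp hmap fun s hs => ⟨hs.1, Set.mem_univ _, Set.mem_univ _⟩
  -- bound on the integrand
  have hGbound : ∀ x : ℝ → EuclideanSpace ℝ (Fin m), ContinuousOn x (Icc 0 T') →
      (∀ t ∈ Icc (0:ℝ) T', ‖x t - x₀‖ ≤ α) → ∀ s ∈ Icc (0:ℝ) T',
      ‖f s (x s) ((WithLp.equiv 2 (Fin m → ℝ)).symm
        fun i => sSup ((fun τ => g i (x τ i)) '' Icc 0 s))‖ ≤ M := by
    intro x hx hxα s hs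
    exact hM.2 ⟨(s, x s, _), ⟨⟨hs.1, hs.2.trans hT'T.le⟩, fun i => coordBox x hxα s hs i,
      fun i => hVmem x hxα hx s hs i⟩, rfl⟩
  -- integrability of the integrand
  have hGint : ∀ x : ℝ → EuclideanSpace ℝ (Fin m), ContinuousOn x (Icc 0 T') →
      ∀ t ∈ Icc (0:ℝ) T',
      IntervalIntegrable (fun s => f s (x s) ((WithLp.equiv 2 (Fin m → ℝ)).symm
        fun i => sSup ((fun τ => g i (x τ i)) '' Icc 0 s)))
        MeasureTheory.volume 0 t := by
    intro x hx t ht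
    apply ContinuousOn.intervalIntegrable
    apply (hGcont x hx).mono
    rw [uIcc_of_le ht.1]
    exact Icc_subset_Icc le_rfl ht.2
  refine ⟨?_, ?_, hlast⟩
  · -- F maps X into X
    intro x hx hxα
    constructor
    · refine ContinuousOn.congr (continuousOn_const.add ?_) (fun t _ => hF x t)
      have hint : MeasureTheory.IntegrableOn
          (fun s => f s (x s) ((WithLp.equiv 2 (Fin m → ℝ)).symm
            fun i => sSup ((fun τ => g i (x τ i)) '' Icc 0 s))) (uIcc 0 T') := by
        rw [uIcc_of_le hT'pos.le]
        exact (hGcont x hx).integrableOn_Icc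
      have := intervalIntegral.continuousOn_primitive_interval hint
      rw [uIcc_of_le hT'pos.le] at this
      exact this
    · intro t ht
      rw [hF x t, add_sub_cancel_left]
      have hb := intervalIntegral.norm_integral_le_of_norm_le_const (C := M)
        (f := fun s => f s (x s) ((WithLp.equiv 2 (Fin m → ℝ)).symm
          fun i => sSup ((fun τ => g i (x τ i)) '' Icc 0 s))) (a := 0) (b := t)
        (fun s hs => by
          rw [uIoc_of_le ht.1] at hs
          exact hGbound x hx hxα s ⟨hs.1.le, hs.2.trans ht.2⟩)
      rw [sub_zero, abs_of_nonneg ht.1] at hb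
      have hMt : M * t ≤ M * T' := mul_le_mul_of_nonneg_left ht.2 hMpos.le
      have hMT : T' * M < α := (lt_div_iff₀ hMpos).1 hT'αM
      linarith
  · -- contraction estimate
    intro x y hx hy hxα hyα t ht
    set S := sSup ((fun s => ‖x s - y s‖) '' Icc 0 T') with hSdef
    have hScont : ContinuousOn (fun s => ‖x s - y s‖) (Icc 0 T') := (hx.sub hy).norm
    have HS := isGreatest_sSup_image' hScont ⟨hT'pos.le, le_rfl⟩
    have hSub : ∀ s ∈ Icc (0:ℝ) T', ‖x s - y s‖ ≤ S := fun s hs => HS.2 ⟨s, hs, rfl⟩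
    have hS0 : 0 ≤ S := (norm_nonneg _).trans (hSub 0 h0T')
    have hcS : 0 ≤ L * (1 + Real.sqrt m * Lα) * S := by
      apply mul_nonneg _ hS0; positivity
    have hptwise : ∀ s ∈ Icc (0:ℝ) T',
        ‖f s (x s) ((WithLp.equiv 2 (Fin m → ℝ)).symm
            fun i => sSup ((fun τ => g i (x τ i)) '' Icc 0 s)) -
          f s (y s) ((WithLp.equiv 2 (Fin m → ℝ)).symm
            fun i => sSup ((fun τ => g i (y τ i)) '' Icc 0 s))‖
          ≤ L * (1 + Real.sqrt m * Lα) * S := by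
      intro s hs
      have key := hfL s ⟨hs.1, hs.2.trans hT'T.le⟩ (x s) (y s) _ _
        (coordBox x hxα s hs) (coordBox y hyα s hs)
        (hVmem x hxα hx s hs) (hVmem y hyα hy s hs)
      have h1 : ‖x s - y s‖ ≤ S := hSub s hs
      have h2 : ‖((WithLp.equiv 2 (Fin m → ℝ)).symm
            fun i => sSup ((fun τ => g i (x τ i)) '' Icc 0 s)) -
          ((WithLp.equiv 2 (Fin m → ℝ)).symm
            fun i => sSup ((fun τ => g i (y τ i)) '' Icc 0 s))‖
          ≤ Real.sqrt m * (Lα * S) := by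
        apply norm_le_sqrt_card' _ _ (by positivity)
        intro i
        have hvi : (((WithLp.equiv 2 (Fin m → ℝ)).symm
              fun i => sSup ((fun τ => g i (x τ i)) '' Icc 0 s)) -
            ((WithLp.equiv 2 (Fin m → ℝ)).symm
              fun i => sSup ((fun τ => g i (y τ i)) '' Icc 0 s))) i
            = sSup ((fun τ => g i (x τ i)) '' Icc 0 s) -
              sSup ((fun τ => g i (y τ i)) '' Icc 0 s) := by
          rw [PiLp.sub_apply, WithLp.equiv_symm_apply, PiLp.toLp_apply, PiLp.toLp_apply]
        rw [hvi]
        have hcx : ContinuousOn (fun τ => g i (x τ i)) (Icc 0 T') :=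
          (hg i).comp_continuousOn (coordCont x hx i)
        have hcy : ContinuousOn (fun τ => g i (y τ i)) (Icc 0 T') :=
          (hg i).comp_continuousOn (coordCont y hy i)
        apply abs_sSup_sub_sSup_le' (isGreatest_sSup_image' hcx hs)
          (isGreatest_sSup_image' hcy hs)
        intro τ hτ
        have hτ' : τ ∈ Icc (0:ℝ) T' := ⟨hτ.1, hτ.2.trans hs.2⟩
        have hgLi := hgL i (x τ i) (coordBox x hxα τ hτ' i) (y τ i) (coordBox y hyα τ hτ' i)
        have h3 : |x τ i - y τ i| ≤ ‖x τ - y τ‖ := by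
          have := abs_coord_le_norm' (x τ - y τ) i
          simpa [PiLp.sub_apply] using this
        have h4 := hSub τ hτ'
        calc |g i (x τ i) - g i (y τ i)| ≤ Lα * |x τ i - y τ i| := hgLi
        _ ≤ Lα * S := by nlinarith
      calc ‖f s (x s) ((WithLp.equiv 2 (Fin m → ℝ)).symm
            fun i => sSup ((fun τ => g i (x τ i)) '' Icc 0 s)) -
          f s (y s) ((WithLp.equiv 2 (Fin m → ℝ)).symm
            fun i => sSup ((fun τ => g i (y τ i)) '' Icc 0 s))‖
          ≤ L * (‖x s - y s‖ + ‖((WithLp.equiv 2 (Fin m → ℝ)).symm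
            fun i => sSup ((fun τ => g i (x τ i)) '' Icc 0 s)) -
          ((WithLp.equiv 2 (Fin m → ℝ)).symm
            fun i => sSup ((fun τ => g i (y τ i)) '' Icc 0 s))‖) := key
      _ ≤ L * (S + Real.sqrt m * (Lα * S)) := by nlinarith
      _ = L * (1 + Real.sqrt m * Lα) * S := by ring
    rw [hF x t, hF y t, add_sub_add_left_eq_sub,
      ← intervalIntegral.integral_sub (hGint x hx t ht) (hGint y hy t ht)]
    have hbb := intervalIntegral.norm_integral_le_of_norm_le_const
      (C := L * (1 + Real.sqrt m * Lα) * S) (a := 0) (b := t)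
      (fun s hs => by
        rw [uIoc_of_le ht.1] at hs
        exact hptwise s ⟨hs.1.le, hs.2.trans ht.2⟩)
    rw [sub_zero, abs_of_nonneg ht.1] at hbb
    have hmono : L * (1 + Real.sqrt m * Lα) * S * t ≤ L * (1 + Real.sqrt m * Lα) * S * T' :=
      mul_le_mul_of_nonneg_left ht.2 hcS
    have heq : L * (1 + Real.sqrt m * Lα) * S * T' =
        T' * L * (1 + Real.sqrt m * Lα) * S := by ring
    linarith
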